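/- Let G be a chordal graph with simplicial vertex s, and let v₁ v₀ v₂ be an induced path of G^s such that both edges v₀v₁ and v₀v₂ are collateral and either both or neither of v₁, v₂ belong to N_G(s). If the edges v₀v₁ and v₀v₂ have a common witness, then v₁ and v₂ are adjacent in G. -/

import Mathlib

/-- The closed neighborhood `N[v]` of a vertex. -/
def closedNbr {V : Type*} (G : SimpleGraph V) (v : V) : Set V := insert v (G.neighborSet v)

/-- A vertex is simplicial if its closed neighborhood is a clique. -/
def Simplicial {V : Type*} (G : SimpleGraph V) (s : V) : Prop := G.IsClique (closedNbr G s)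

/-- A vertex is universal if it is adjacent to all other vertices. -/
def Universal {V : Type*} (G : SimpleGraph V) (v : V) : Prop := ∀ u, u ≠ v → G.Adj v u

/-- The auxiliary graph `G^s` with respect to a simplicial vertex `s`. -/
def auxGraph {V : Type*} (G : SimpleGraph V) (s : V) : SimpleGraph V where
  Adj u v := u ≠ v ∧
    ((u ∉ closedNbr G s ∧ v ∉ closedNbr G s ∧ G.Adj u v) ∨
     (u ∈ closedNbr G s ∧ v ∈ closedNbr G s ∧ G.neighborSet u ∪ G.neighborSet v ≠ Set.univ) ∨
     (u ∈ closedNbr G s ∧ v ∉ closedNbr G s ∧ ¬ closedNbr G v ⊆ closedNbr G u) ∨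
     (v ∈ closedNbr G s ∧ u ∉ closedNbr G s ∧ ¬ closedNbr G u ⊆ closedNbr G v))
  symm := by
    constructor
    rintro u v ⟨hne, h⟩
    refine ⟨hne.symm, ?_⟩
    rcases h with ⟨h1, h2, h3⟩ | ⟨h1, h2, h3⟩ | h | h
    · exact Or.inl ⟨h2, h1, h3.symm⟩
    · exact Or.inr (Or.inl ⟨h2, h1, by rwa [Set.union_comm] at h3⟩)
    · exact Or.inr (Or.inr (Or.inr h))
    · exact Or.inr (Or.inr (Or.inl h))
  loopless := ⟨fun v h => h.1 rfl⟩

/-- A witness of an edge `uv` of `G^s`: a vertex `w ∉ N_G[s]` such that for each end `x`,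
`w` is adjacent to `x` in `G` iff `x ∉ N_G[s]`. -/
def EdgeWitness {V : Type*} (G : SimpleGraph V) (s u v w : V) : Prop :=
  w ∉ closedNbr G s ∧ (G.Adj w u ↔ u ∉ closedNbr G s) ∧ (G.Adj w v ↔ v ∉ closedNbr G s)

/-- An edge of `G^s` is collateral if it is an edge of `G` and one end is in `N_G[s]`. -/
def Collateral {V : Type*} (G : SimpleGraph V) (s u v : V) : Prop :=
  (auxGraph G s).Adj u v ∧ G.Adj u v ∧ (u ∈ closedNbr G s ∨ v ∈ closedNbr G s)

/-- A witness of a clique `K` of `G^s`: a vertex `w ∉ N_G[s]` such that `N_G[w] ∩ K` and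
`N_G[s] ∩ K` partition `K`. -/
def CliqueWitness {V : Type*} (G : SimpleGraph V) (s : V) (K : Set V) (w : V) : Prop :=
  w ∉ closedNbr G s ∧ ∀ x ∈ K, (x ∈ closedNbr G w ↔ x ∉ closedNbr G s)

/-- A graph is chordal if it has no induced cycle of length at least four. -/
def Chordal {V : Type*} (G : SimpleGraph V) : Prop :=
  ¬ ∃ (n : ℕ) (f : ZMod n → V), 4 ≤ n ∧ Function.Injective f ∧
      ∀ i j : ZMod n, G.Adj (f i) (f j) ↔ (j = i + 1 ∨ i = j + 1)

/-- If v₁ v₀ v₂ is an induced path of G^s whose edges v₀v₁ and v₀v₂ are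
collateral, with either both or neither of v₁, v₂ in N_G(s), and the two edges have a
common witness, then v₁ and v₂ are adjacent in G. -/
theorem stmt_6 {V : Type*} [Fintype V] (G : SimpleGraph V) (s v₀ v₁ v₂ : V)
    (hG : Chordal G) (hs : Simplicial G s)
    (h12 : v₁ ≠ v₂)
    (ha1 : (auxGraph G s).Adj v₀ v₁) (ha2 : (auxGraph G s).Adj v₀ v₂)
    (hind : ¬ (auxGraph G s).Adj v₁ v₂)
    (hc1 : Collateral G s v₀ v₁) (hc2 : Collateral G s v₀ v₂)
    (hpar : v₁ ∈ G.neighborSet s ↔ v₂ ∈ G.neighborSet s)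
    (w : V) (hw1 : EdgeWitness G s v₀ v₁ w) (hw2 : EdgeWitness G s v₀ v₂ w) :
    G.Adj v₁ v₂ := by
  by_cases h1 : v₁ ∈ closedNbr G s
  · by_cases h2 : v₂ ∈ closedNbr G s
    · exact hs h1 h2 h12
    · -- mixed case : v₁ = s
      exfalso
      have hv1s : v₁ = s := by
        rcases h1 with h | h
        · exact h
        · exact absurd (Set.mem_insert_of_mem _ (hpar.mp h)) h2
      have hsub : closedNbr G v₂ ⊆ closedNbr G v₁ := by
        by_contra hns
        exact hind (by change v₁ ≠ v₂ ∧ _; exact ⟨h12, Or.inr (Or.inr (Or.inl ⟨h1, h2, hns⟩))⟩)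
      have hwv2 : G.Adj w v₂ := hw2.2.2.mpr h2
      have : w ∈ closedNbr G v₂ := Set.mem_insert_of_mem _ hwv2.symm
      have : w ∈ closedNbr G s := hv1s ▸ hsub this
      exact hw1.1 this
  · by_cases h2 : v₂ ∈ closedNbr G s
    · -- mixed case : v₂ = s
      exfalso
      have hv2s : v₂ = s := by
        rcases h2 with h | h
        · exact h
        · exact absurd (Set.mem_insert_of_mem _ (hpar.mpr h)) h1
      have hsub : closedNbr G v₁ ⊆ closedNbr G v₂ := by
        by_contra hns
        exact hind (by change v₁ ≠ v₂ ∧ _; exact ⟨h12, Or.inr (Or.inr (Or.inr ⟨h2, h1, hns⟩))⟩)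
      have hwv1 : G.Adj w v₁ := hw1.2.2.mpr h1
      have : w ∈ closedNbr G v₁ := Set.mem_insert_of_mem _ hwv1.symm
      have : w ∈ closedNbr G s := hv2s ▸ hsub this
      exact hw1.1 this
    · -- both outside N[s] : chordality argument
      by_contra hnadj
      have hv0 : v₀ ∈ closedNbr G s := hc1.2.2.resolve_right h1
      have hwv0 : ¬ G.Adj w v₀ := fun h => (hw1.2.1.mp h) hv0
      have hwv1 : G.Adj w v₁ := hw1.2.2.mpr h1
      have hwv2 : G.Adj w v₂ := hw2.2.2.mpr h2
      have h01 : G.Adj v₀ v₁ := hc1.2.1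
      have h02 : G.Adj v₀ v₂ := hc2.2.1
      have hne01 : v₀ ≠ v₁ := h01.ne
      have hne02 : v₀ ≠ v₂ := h02.ne
      have hnew0 : w ≠ v₀ := fun h => hw1.1 (h ▸ hv0)
      have hnew1 : w ≠ v₁ := hwv1.ne
      have hnew2 : w ≠ v₂ := hwv2.ne
      refine hG ⟨4, ![v₁, v₀, v₂, w], le_refl 4, ?_, ?_⟩
      · intro i j hij
        fin_cases i <;> fin_cases j <;>
          first
            | rfl
            | exact absurd hij hne01 | exact absurd hij hne01.symm
            | exact absurd hij hne02 | exact absurd hij hne02.symm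
            | exact absurd hij h12 | exact absurd hij h12.symm
            | exact absurd hij hnew0 | exact absurd hij hnew0.symm
            | exact absurd hij hnew1 | exact absurd hij hnew1.symm
            | exact absurd hij hnew2 | exact absurd hij hnew2.symm
      · have hF00 : ¬((0:ZMod 4) = 0+1 ∨ (0:ZMod 4) = 0+1) := by decide
        have hF11 : ¬((1:ZMod 4) = 1+1 ∨ (1:ZMod 4) = 1+1) := by decide
        have hF22 : ¬((2:ZMod 4) = 2+1 ∨ (2:ZMod 4) = 2+1) := by decide
        have hF33 : ¬((3:ZMod 4) = 3+1 ∨ (3:ZMod 4) = 3+1) := by decide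
        have hF02 : ¬((2:ZMod 4) = 0+1 ∨ (0:ZMod 4) = 2+1) := by decide
        have hF20 : ¬((0:ZMod 4) = 2+1 ∨ (2:ZMod 4) = 0+1) := by decide
        have hF13 : ¬((3:ZMod 4) = 1+1 ∨ (1:ZMod 4) = 3+1) := by decide
        have hF31 : ¬((1:ZMod 4) = 3+1 ∨ (3:ZMod 4) = 1+1) := by decide
        intro i j
        fin_cases i <;> fin_cases j <;> constructor <;> intro h <;>
          first
            | exact Or.inl rfl | exact Or.inr rfl
            | exact absurd h hF00 | exact absurd h hF11
            | exact absurd h hF22 | exact absurd h hF33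
            | exact absurd h hF02 | exact absurd h hF20
            | exact absurd h hF13 | exact absurd h hF31
            | exact h01 | exact h01.symm | exact h02 | exact h02.symm
            | exact hwv1 | exact hwv1.symm | exact hwv2 | exact hwv2.symm
            | exact (G.irrefl h).elim
            | exact absurd h hnadj | exact absurd h.symm hnadj
            | exact absurd h hwv0 | exact absurd h.symm hwv0
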